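/- Let K be a finite field and F a subfield of K, with q = |F| and ℓ = [K : F]. Let V be a K-vector space and let U be an F-submodule of V (V regarded as an F-vector space by restriction of scalars). If U is not closed under scalar multiplication by K (i.e. there exist λ ∈ K and u ∈ U with λ·u ∉ U), then Φ_ℓ(q) divides the cardinality of the (finite) set {λ·U : λ ∈ Kˣ} of F-submodules of V, where λ·U denotes the image of U under the F-linear map v ↦ λ·v. -/

import Mathlib

open Polynomial Pointwise

private lemma cyclo_mul_dvd' {d l : ℕ} (hd : d ∣ l) (hd0 : 0 < d) (hlt : d < l) :
    cyclotomic l ℤ * (X ^ d - 1) ∣ X ^ l - 1 := by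
  have hl : 0 < l := hd0.trans hlt
  rw [← prod_cyclotomic_eq_X_pow_sub_one hd0 ℤ, ← prod_cyclotomic_eq_X_pow_sub_one hl ℤ]
  have hnot : l ∉ Nat.divisors d := fun h =>
    absurd (Nat.le_of_dvd hd0 (Nat.dvd_of_mem_divisors h)) (not_le.mpr hlt)
  have hsub : insert l (Nat.divisors d) ⊆ Nat.divisors l := by
    intro i hi
    rcases Finset.mem_insert.mp hi with rfl | hi
    · exact Nat.mem_divisors.mpr ⟨dvd_rfl, hl.ne'⟩
    · exact Nat.mem_divisors.mpr ⟨(Nat.dvd_of_mem_divisors hi).trans hd, hl.ne'⟩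
  have := Finset.prod_dvd_prod_of_subset _ _ (fun i => cyclotomic i ℤ) hsub
  rwa [Finset.prod_insert hnot] at this

private lemma cyclo_int_dvd' {q d l : ℕ} (hd : d ∣ l) (hd0 : 0 < d) (hlt : d < l) :
    (cyclotomic l ℤ).eval (q : ℤ) * ((q : ℤ) ^ d - 1) ∣ (q : ℤ) ^ l - 1 := by
  have := Polynomial.eval_dvd (x := (q : ℤ)) (cyclo_mul_dvd' hd hd0 hlt)
  simpa using this

/-- Let `F ⊆ K` be finite fields with `q = |F|` and `ℓ = [K : F]`, let `V` be a `K`-vector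
space and `U` an `F`-submodule of `V`.  If `U` is not closed under scalar multiplication by
`K`, then `Φ_ℓ(q)` divides the cardinality of the orbit `{λ·U : λ ∈ Kˣ}` of `U` under the
action of `Kˣ` on `F`-submodules of `V`. -/
theorem cyclotomic_dvd_card_orbit_of_submodule (F K V : Type*) [Field F] [Field K]
    [Algebra F K] [Finite F] [Finite K] [AddCommGroup V] [Module K V] [Module F V]
    [IsScalarTower F K V] (U : Submodule F V)
    (hU : ∃ (c : K) (u : V), u ∈ U ∧ c • u ∉ U) :
    ((Polynomial.cyclotomic (Module.finrank F K) ℤ).eval (Nat.card F : ℤ)) ∣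
      (Nat.card (Set.range fun c : Kˣ =>
        Submodule.map ((LinearMap.lsmul K V (c : K)).restrictScalars F) U) : ℤ) := by
  classical
  haveI : SMulCommClass K F V := ⟨fun k f v => by
    rw [← algebraMap_smul K f v, ← mul_smul, mul_comm, mul_smul, algebraMap_smul]⟩
  haveI : SMulCommClass Kˣ F V := ⟨fun k f v => smul_comm (k : K) f v⟩
  haveI : FiniteDimensional F K := Module.Finite.of_finite
  haveI : Fintype K := Fintype.ofFinite K
  haveI : Fintype F := Fintype.ofFinite F
  -- the subalgebra of scalars preserving U
  let E : Subalgebra F K :=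
    { carrier := {c : K | ∀ u ∈ U, c • u ∈ U}
      add_mem' := fun {a b} ha hb u hu => by
        rw [add_smul]; exact U.add_mem (ha u hu) (hb u hu)
      mul_mem' := fun {a b} ha hb u hu => by
        rw [mul_smul]; exact ha _ (hb u hu)
      algebraMap_mem' := fun f u hu => by
        rw [algebraMap_smul]; exact U.smul_mem f hu }
  have hfield : IsField E := Finite.isField_of_domain E
  have hinv : ∀ x ∈ E, x⁻¹ ∈ E := by
    intro x hx
    rcases eq_or_ne x 0 with rfl | hx0
    · simpa using E.zero_mem
    · obtain ⟨y, hy⟩ := hfield.mul_inv_cancel (a := ⟨x, hx⟩)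
        (fun h => hx0 (congrArg Subtype.val h))
      have h1 : x * (y : K) = 1 := congrArg Subtype.val hy
      have : (y : K) = x⁻¹ := eq_inv_of_mul_eq_one_right h1
      exact this ▸ y.2
  let E' : IntermediateField F K := E.toIntermediateField hinv
  haveI : Fintype E' := Fintype.ofFinite E'
  set l := Module.finrank F K with hl
  set d := Module.finrank F E' with hd
  have htower : d * Module.finrank E' K = l := Module.finrank_mul_finrank F E' K
  have hdl : d ∣ l := ⟨_, htower.symm⟩
  have hd0 : 0 < d := Module.finrank_pos
  -- E' is proper
  obtain ⟨c₀, u₀, hu₀, hc₀u₀⟩ := hU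
  have hc₀ : c₀ ∉ E := fun h => hc₀u₀ (h u₀ hu₀)
  have hne : (Subalgebra.toSubmodule E : Submodule F K) ≠ ⊤ := by
    intro h
    exact hc₀ (h ▸ Submodule.mem_top : c₀ ∈ Subalgebra.toSubmodule E)
  have hdlt : d < l := by
    have := Submodule.finrank_lt (K := F) (V := K) hne
    exact this
  -- the key membership characterization
  have key : ∀ c : Kˣ, c • U = U ↔ (c : K) ∈ E := by
    intro c
    constructor
    · intro h u hu
      have : c • u ∈ c • U := Submodule.smul_mem_pointwise_smul u c U hu
      rw [h] at this
      simpa [Units.smul_def] using this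
    · intro hc
      apply le_antisymm
      · intro v hv
        rw [← SetLike.mem_coe, show ((c • U : Submodule F V) : Set V) = c • (U : Set V) from rfl,
          Set.mem_smul_set_iff_inv_smul_mem] at hv
        rw [Units.smul_def] at hv
        have h2 := hc _ hv
        rwa [smul_smul, c.mul_inv, one_smul] at h2
      · intro u hu
        rw [← SetLike.mem_coe, show ((c • U : Submodule F V) : Set V) = c • (U : Set V) from rfl,
          Set.mem_smul_set_iff_inv_smul_mem]
        have hcinv : ((c⁻¹ : Kˣ) : K) ∈ E := by
          rw [Units.val_inv_eq_inv_val]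
          exact hinv _ hc
        simpa [Units.smul_def] using hcinv _ hu
  -- the range is the orbit
  have hrange : (Set.range fun c : Kˣ =>
      Submodule.map ((LinearMap.lsmul K V (c : K)).restrictScalars F) U)
      = MulAction.orbit Kˣ U := by
    have : ∀ c : Kˣ, Submodule.map ((LinearMap.lsmul K V (c : K)).restrictScalars F) U
        = c • U := by
      intro c
      rfl
    simp only [this]
    rfl
  -- stabilizer ≃ units of E'
  have hstabcard : Nat.card (MulAction.stabilizer Kˣ U) = Nat.card E'ˣ := by
    refine Nat.card_eq_of_bijective (fun u : E'ˣ => ?_) ?_ |>.symm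
    · refine ⟨Units.mk ((u : E') : K) (((u⁻¹ : E'ˣ) : E') : K) ?_ ?_, ?_⟩
      · rw [← MulMemClass.coe_mul, u.mul_inv, OneMemClass.coe_one]
      · rw [← MulMemClass.coe_mul, u.inv_mul, OneMemClass.coe_one]
      · show _ • U = U
        exact (key _).mpr (u : E').2
    · constructor
      · intro a b hab
        have h := congrArg (fun x : MulAction.stabilizer Kˣ U => ((x : Kˣ) : K)) hab
        exact Units.ext (Subtype.ext h)
      · rintro ⟨c, hc⟩
        have hcE : (c : K) ∈ E := (key c).mp hc
        have hcE' : ((c⁻¹ : Kˣ) : K) ∈ E := by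
          rw [Units.val_inv_eq_inv_val]; exact hinv _ hcE
        refine ⟨⟨⟨(c : K), hcE⟩, ⟨((c⁻¹ : Kˣ) : K), hcE'⟩, ?_, ?_⟩, ?_⟩
        · exact Subtype.ext (by simp)
        · exact Subtype.ext (by simp)
        · exact Subtype.ext (Units.ext rfl)
  -- cardinalities
  haveI : Fintype (MulAction.orbit Kˣ U) := by rw [← hrange]; exact Set.fintypeRange _
  haveI : Fintype (MulAction.stabilizer Kˣ U) := Fintype.ofFinite _
  have horb := MulAction.card_orbit_mul_card_stabilizer_eq_card_group Kˣ U
  set q := Nat.card F with hq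
  have hq2 : 2 ≤ q := by
    rw [hq, Nat.card_eq_fintype_card]
    exact Fintype.one_lt_card
  have hcardK : Nat.card K = q ^ l := by
    rw [Nat.card_eq_fintype_card, hq, Nat.card_eq_fintype_card]
    exact Module.card_eq_pow_finrank
  have hcardE : Nat.card E' = q ^ d := by
    rw [Nat.card_eq_fintype_card, hq, Nat.card_eq_fintype_card]
    exact Module.card_eq_pow_finrank
  have hKx : Nat.card Kˣ = q ^ l - 1 := by rw [Nat.card_units, hcardK]
  have hEx : Nat.card E'ˣ = q ^ d - 1 := by rw [Nat.card_units, hcardE]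
  have hmain : Nat.card (MulAction.orbit Kˣ U) * (q ^ d - 1) = q ^ l - 1 := by
    rw [← hEx, ← hstabcard, ← hKx, Nat.card_eq_fintype_card, Nat.card_eq_fintype_card,
      Nat.card_eq_fintype_card]
    exact horb
  have h1d : 1 ≤ q ^ d := Nat.one_le_pow _ _ (by omega)
  have h1l : 1 ≤ q ^ l := Nat.one_le_pow _ _ (by omega)
  have hcast : (Nat.card (MulAction.orbit Kˣ U) : ℤ) * ((q : ℤ) ^ d - 1)
      = (q : ℤ) ^ l - 1 := by
    have := congrArg (fun n : ℕ => (n : ℤ)) hmain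
    push_cast [Nat.cast_sub h1d, Nat.cast_sub h1l] at this
    exact_mod_cast this
  have hS0 : ((q : ℤ) ^ d - 1) ≠ 0 := by
    have : (1 : ℤ) < (q : ℤ) ^ d :=
      one_lt_pow₀ (by exact_mod_cast hq2) hd0.ne'
    omega
  have hdvd := cyclo_int_dvd' (q := q) hdl hd0 hdlt
  have hgoal : (cyclotomic l ℤ).eval (q : ℤ) ∣ (Nat.card (MulAction.orbit Kˣ U) : ℤ) := by
    refine (mul_dvd_mul_iff_right hS0).mp ?_
    rw [hcast]
    exact hdvd
  rw [hrange]
  exact hgoal
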